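/- For every positive integer d, all real numbers N₁,…,N_d, x₁,…,x_d, t, the identity Σ_{j=0}^{d} Σ_{k=max{j,1}}^{d} (−1)^j (1/k!) C(k,j) N_k (Σ_{l=1}^{k} l·x_l − j·t)^k = Σ_{k=1}^{d} N_k t^k holds. -/

import Mathlib

open scoped BigOperators

private noncomputable def gAux (t : ℝ) (k m : ℕ) (S : ℝ) : ℝ :=
  ∑ j ∈ Finset.range (k + 1), (-1 : ℝ) ^ j * (k.choose j : ℝ) * (S + j * t) ^ m

private lemma gAux_succ (t : ℝ) (k m : ℕ) (S : ℝ) :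
    gAux t (k + 1) m S = gAux t k m S - gAux t k m (S + t) := by
  have hd : ∀ S' : ℝ, gAux t k m S' =
      (∑ i ∈ Finset.range (k + 1),
        (-1 : ℝ) ^ (i + 1) * (k.choose (i + 1) : ℝ) * (S' + (↑(i + 1)) * t) ^ m)
      + (-1 : ℝ) ^ 0 * (k.choose 0 : ℝ) * (S' + ((0 : ℕ) : ℝ) * t) ^ m := by
    intro S'
    have h1 : gAux t k m S' = ∑ j ∈ Finset.range (k + 1 + 1),
        (-1 : ℝ) ^ j * (k.choose j : ℝ) * (S' + j * t) ^ m := by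
      rw [gAux]
      conv_rhs => rw [Finset.sum_range_succ]
      simp [Nat.choose_succ_self]
    rw [h1, Finset.sum_range_succ']
  rw [gAux, Finset.sum_range_succ']
  have key : ∀ i, (-1 : ℝ) ^ (i + 1) * ((k + 1).choose (i + 1) : ℝ) * (S + (↑(i + 1)) * t) ^ m
      = (-1 : ℝ) ^ (i + 1) * (k.choose (i + 1) : ℝ) * (S + (↑(i + 1)) * t) ^ m
        - (-1 : ℝ) ^ i * (k.choose i : ℝ) * ((S + t) + i * t) ^ m := by
    intro i
    have hc : ((k + 1).choose (i + 1) : ℝ) = (k.choose i : ℝ) + (k.choose (i + 1) : ℝ) := by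
      rw [Nat.choose_succ_succ]; push_cast; ring
    rw [hc]
    push_cast
    ring
  rw [Finset.sum_congr rfl fun i _ => key i, Finset.sum_sub_distrib]
  rw [hd S]
  rw [show gAux t k m (S + t) =
      ∑ i ∈ Finset.range (k + 1), (-1 : ℝ) ^ i * (k.choose i : ℝ) * ((S + t) + i * t) ^ m from
    rfl]
  simp only [Nat.choose_zero_right, Nat.cast_one, Nat.cast_zero, pow_zero]
  ring

private lemma gAux_eq (t : ℝ) : ∀ k : ℕ, ∀ m ≤ k, ∀ S : ℝ,
    gAux t k m S = if m = k then (-t) ^ k * (k.factorial : ℝ) else 0 := by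
  intro k
  induction k with
  | zero =>
    intro m hm S
    interval_cases m
    simp [gAux]
  | succ k ih =>
    intro m hm S
    rw [gAux_succ]
    rcases Nat.lt_succ_iff_lt_or_eq.mp (Nat.lt_succ_of_le hm) with hmk | rfl
    · rw [ih m (Nat.lt_succ_iff.mp hmk) S, ih m (Nat.lt_succ_iff.mp hmk) (S + t), sub_self,
        if_neg (by omega : ¬ m = k + 1)]
    · -- m = k + 1
      rw [if_pos rfl]
      have expand : ∀ j : ℕ, (S + j * t) ^ (k + 1) - ((S + t) + j * t) ^ (k + 1)
          = -∑ r ∈ Finset.range (k + 1),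
              ((S + j * t) ^ r * t ^ (k + 1 - r) * ((k + 1).choose r : ℝ)) := by
        intro j
        have h2 : ((S + t) + j * t) ^ (k + 1)
            = ∑ r ∈ Finset.range (k + 1 + 1),
              (S + j * t) ^ r * t ^ (k + 1 - r) * ((k + 1).choose r : ℝ) := by
          rw [show (S + t) + j * t = (S + j * t) + t by ring, add_pow]
        rw [h2, Finset.sum_range_succ]
        simp only [Nat.choose_self, Nat.cast_one, Nat.sub_self, pow_zero, mul_one]
        ring
      have swap : gAux t k (k + 1) S - gAux t k (k + 1) (S + t)
          = -∑ r ∈ Finset.range (k + 1),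
              ((k + 1).choose r : ℝ) * t ^ (k + 1 - r) * gAux t k r S := by
        rw [gAux, gAux, ← Finset.sum_sub_distrib]
        have h3 : ∀ j ∈ Finset.range (k + 1),
            (-1 : ℝ) ^ j * (k.choose j : ℝ) * (S + j * t) ^ (k + 1)
              - (-1 : ℝ) ^ j * (k.choose j : ℝ) * ((S + t) + j * t) ^ (k + 1)
            = ∑ r ∈ Finset.range (k + 1),
                -(((k + 1).choose r : ℝ) * t ^ (k + 1 - r)
                  * ((-1 : ℝ) ^ j * (k.choose j : ℝ) * (S + j * t) ^ r)) := by
          intro j _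
          rw [← mul_sub, expand j, mul_neg, Finset.mul_sum, ← Finset.sum_neg_distrib]
          exact Finset.sum_congr rfl fun r _ => by ring
        rw [Finset.sum_congr rfl h3, Finset.sum_comm, ← Finset.sum_neg_distrib]
        refine Finset.sum_congr rfl fun r _ => ?_
        rw [gAux]
        rw [show ((k + 1).choose r : ℝ) * t ^ (k + 1 - r) *
            ∑ j ∈ Finset.range (k + 1), (-1 : ℝ) ^ j * (k.choose j : ℝ) * (S + j * t) ^ r
          = ∑ j ∈ Finset.range (k + 1), ((k + 1).choose r : ℝ) * t ^ (k + 1 - r) *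
              ((-1 : ℝ) ^ j * (k.choose j : ℝ) * (S + j * t) ^ r) from Finset.mul_sum ..]
        rw [← Finset.sum_neg_distrib]
      rw [swap]
      have h4 : ∀ r ∈ Finset.range (k + 1),
          ((k + 1).choose r : ℝ) * t ^ (k + 1 - r) * gAux t k r S
          = if r = k then ((k + 1).choose k : ℝ) * t * ((-t) ^ k * (k.factorial : ℝ)) else 0 := by
        intro r hr
        rw [ih r (Nat.lt_succ_iff.mp (Finset.mem_range.mp hr)) S]
        rcases eq_or_ne r k with rfl | hrk
        · simp
        · simp [hrk]
      rw [Finset.sum_congr rfl h4, Finset.sum_ite_eq' (Finset.range (k + 1)) k]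
      simp only [Finset.mem_range, Nat.lt_succ_self, if_true, Nat.choose_succ_self_right,
        Nat.factorial_succ]
      push_cast
      ring

private lemma key_inner (k : ℕ) (S t : ℝ) :
    ∑ j ∈ Finset.range (k + 1), (-1 : ℝ) ^ j * (k.choose j : ℝ) * (S - j * t) ^ k
      = (k.factorial : ℝ) * t ^ k := by
  have h := gAux_eq (-t) k k le_rfl S
  rw [if_pos rfl, neg_neg] at h
  rw [gAux] at h
  simp only [mul_neg, ← sub_eq_add_neg] at h
  rw [h]; ring

/-- The polynomial identity
`∑_{j=0}^{d} ∑_{k=max{j,1}}^{d} (-1)^j (1/k!) C(k,j) N_k (∑_{l=1}^{k} l·x_l − j·t)^k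
  = ∑_{k=1}^{d} N_k t^k`. -/
theorem stmt_8 (d : ℕ) (hd : 1 ≤ d) (N x : ℕ → ℝ) (t : ℝ) :
    ∑ j ∈ Finset.range (d + 1), ∑ k ∈ Finset.Icc (max j 1) d,
        (-1 : ℝ) ^ j * (1 / (k.factorial : ℝ)) * (k.choose j : ℝ) * N k *
          ((∑ l ∈ Finset.Icc 1 k, (l : ℝ) * x l) - (j : ℝ) * t) ^ k
      = ∑ k ∈ Finset.Icc 1 d, N k * t ^ k := by
  rw [Finset.sum_comm' (t' := Finset.Icc 1 d) (s' := fun k => Finset.range (k + 1))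
    (by
      intro j k
      simp only [Finset.mem_range, Finset.mem_Icc, max_le_iff, le_max_iff]
      omega)]
  refine Finset.sum_congr rfl fun k hk => ?_
  have hkf : (k.factorial : ℝ) ≠ 0 := Nat.cast_ne_zero.mpr k.factorial_ne_zero
  have h5 : ∀ j ∈ Finset.range (k + 1),
      (-1 : ℝ) ^ j * (1 / (k.factorial : ℝ)) * (k.choose j : ℝ) * N k *
          ((∑ l ∈ Finset.Icc 1 k, (l : ℝ) * x l) - (j : ℝ) * t) ^ k
      = (1 / (k.factorial : ℝ)) * N k *
          ((-1 : ℝ) ^ j * (k.choose j : ℝ) *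
            ((∑ l ∈ Finset.Icc 1 k, (l : ℝ) * x l) - (j : ℝ) * t) ^ k) := by
    intro j _; ring
  rw [Finset.sum_congr rfl h5, ← Finset.mul_sum,
    key_inner k (∑ l ∈ Finset.Icc 1 k, (l : ℝ) * x l) t]
  field_simp
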